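/- Let p be a prime and m ≥ 2. Suppose d and i are nonnegative integers with d = p^(m-1) + (p-1)a and i = 1 + pa for some integer a with 0 ≤ a < 1 + p + ... + p^(m-2), and suppose d < 2p^(m-1) - 1. Then the binomial coefficient C(d, i) is congruent to 0 modulo p. -/

import Mathlib

private lemma digsum_step (p n : ℕ) (hp : 2 ≤ p) :
    (p.digits n).sum = n % p + (p.digits (n / p)).sum := by
  rcases Nat.eq_zero_or_pos n with h | h
  · simp [h]
  · rw [Nat.digits_def' hp h]; simp

private lemma digsum_le (p : ℕ) (hp : 2 ≤ p) :
    ∀ k n : ℕ, n < p ^ k → (p.digits n).sum ≤ k * (p - 1) := by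
  intro k
  induction k with
  | zero => intro n hn; rw [pow_zero] at hn; interval_cases n; simp
  | succ k ih =>
    intro n hn
    rw [pow_succ] at hn
    have hcomm : p ^ k * p = p * p ^ k := mul_comm _ _
    have h2 : n / p < p ^ k := Nat.div_lt_of_lt_mul (by omega)
    have h1 : n % p < p := Nat.mod_lt n (by omega)
    have h3 := ih (n / p) h2
    rw [digsum_step p n hp]
    have hk1 : (k + 1) * (p - 1) = k * (p - 1) + (p - 1) := by ring
    omega

private lemma digsum_lt (p : ℕ) (hp : 2 ≤ p) :
    ∀ k n : ℕ, n + 1 < p ^ k → (p.digits n).sum < k * (p - 1) := by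
  intro k
  induction k with
  | zero => intro n hn; rw [pow_zero] at hn; omega
  | succ k ih =>
    intro n hn
    rw [pow_succ] at hn
    have hcomm : p ^ k * p = p * p ^ k := mul_comm _ _
    have h2 : n / p < p ^ k := Nat.div_lt_of_lt_mul (by omega)
    have h1 : n % p < p := Nat.mod_lt n (by omega)
    have hdm := Nat.div_add_mod n p
    rw [digsum_step p n hp]
    have hk1 : (k + 1) * (p - 1) = k * (p - 1) + (p - 1) := by ring
    rcases lt_or_ge (n / p + 1) (p ^ k) with h3 | h3
    · have := ih (n / p) h3
      omega
    · have hpk : 1 ≤ p ^ k := Nat.one_le_pow _ _ (by omega)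
      have h4 : n / p = p ^ k - 1 := by omega
      have hmul : p * (n / p) = p * p ^ k - p := by
        rw [h4, Nat.mul_sub, mul_one]
      have h6 : n % p < p - 1 := by omega
      have h7 := digsum_le p hp k (n / p) (by omega)
      omega

private lemma digsum_pow_add (p : ℕ) (hp : 2 ≤ p) :
    ∀ k c : ℕ, c < p ^ k → (p.digits (p ^ k + c)).sum = 1 + (p.digits c).sum := by
  intro k
  induction k with
  | zero =>
    intro c hc
    rw [pow_zero] at hc ⊢
    interval_cases c
    rw [add_zero, digsum_step p 1 hp, Nat.mod_eq_of_lt (by omega : 1 < p),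
      Nat.div_eq_of_lt (by omega : 1 < p)]
  | succ k ih =>
    intro c hc
    have hP : p ^ (k + 1) = p * p ^ k := by rw [pow_succ, mul_comm]
    have hcd : c / p < p ^ k := Nat.div_lt_of_lt_mul (by omega)
    have hmod : (p ^ (k + 1) + c) % p = c % p := by
      rw [hP, Nat.mul_add_mod]
    have hdiv : (p ^ (k + 1) + c) / p = p ^ k + c / p := by
      rw [hP, Nat.mul_add_div (by omega : 0 < p)]
    rw [digsum_step p _ hp, hmod, hdiv, ih _ hcd, digsum_step p c hp]
    omega

private lemma digsum_compl (p : ℕ) (hp : 2 ≤ p) :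
    ∀ k a : ℕ, a < p ^ k →
      (p.digits (p ^ k - 1 - a)).sum + (p.digits a).sum = k * (p - 1) := by
  intro k
  induction k with
  | zero => intro a ha; rw [pow_zero] at ha; interval_cases a; simp
  | succ k ih =>
    intro a ha
    have hP : p ^ (k + 1) = p * p ^ k := by rw [pow_succ, mul_comm]
    have hpk : 1 ≤ p ^ k := Nat.one_le_pow _ _ (by omega)
    have hdm := Nat.div_add_mod a p
    have hrp : a % p < p := Nat.mod_lt a (by omega)
    have hqlt : a / p < p ^ k := Nat.div_lt_of_lt_mul (by omega)
    have hbval : p ^ (k + 1) - 1 - a = p * (p ^ k - 1 - a / p) + (p - 1 - a % p) := by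
      have h1 : p * (p ^ k - 1 - a / p) = p * p ^ k - p - p * (a / p) := by
        rw [Nat.mul_sub, Nat.mul_sub, mul_one]
      have h3 : p * (a / p + 1) ≤ p * p ^ k := Nat.mul_le_mul_left p hqlt
      have h4 : p * (a / p + 1) = p * (a / p) + p := by ring
      omega
    have hbmod : (p ^ (k + 1) - 1 - a) % p = p - 1 - a % p := by
      rw [hbval, Nat.mul_add_mod,
        Nat.mod_eq_of_lt (show p - 1 - a % p < p by omega)]
    have hbdiv : (p ^ (k + 1) - 1 - a) / p = p ^ k - 1 - a / p := by
      rw [hbval, Nat.mul_add_div (by omega : 0 < p),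
        Nat.div_eq_of_lt (show p - 1 - a % p < p by omega), add_zero]
    rw [digsum_step p (p ^ (k + 1) - 1 - a) hp, digsum_step p a hp, hbmod, hbdiv]
    have := ih (a / p) hqlt
    have hk1 : (k + 1) * (p - 1) = k * (p - 1) + (p - 1) := by ring
    omega

/-- Lucas-type vanishing of the binomial coefficient `C(d, i)` mod `p`. -/
theorem stmt_1 (p m a d i : ℕ) (hp : p.Prime) (hm : 2 ≤ m)
    (ha : a < ∑ k ∈ Finset.range (m - 1), p ^ k)
    (hd : d = p ^ (m - 1) + (p - 1) * a)
    (hi : i = 1 + p * a)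
    (hlt : d < 2 * p ^ (m - 1) - 1) :
    Nat.choose d i % p = 0 := by
  haveI : Fact p.Prime := ⟨hp⟩
  have hp2 : 2 ≤ p := hp.two_le
  set k := m - 1 with hk
  have hpk : 1 ≤ p ^ k := Nat.one_le_pow _ _ (by omega)
  have hale : a ≤ (p - 1) * a := Nat.le_mul_of_pos_left a (by omega)
  have hca : (p - 1) * a < p ^ k - 1 := by omega
  have hapk : a < p ^ k := by omega
  have hpa : p * a = (p - 1) * a + a := by
    rw [Nat.sub_one_mul]
    have : a ≤ p * a := Nat.le_mul_of_pos_left a (by omega)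
    omega
  have hile : i ≤ d := by omega
  have hdi : d - i = p ^ k - 1 - a := by omega
  have hsi : (p.digits i).sum = 1 + (p.digits a).sum := by
    rw [digsum_step p i hp2, hi]
    have h1 : (1 + p * a) % p = 1 := by
      rw [Nat.add_mul_mod_self_left, Nat.mod_eq_of_lt (by omega)]
    have h2 : (1 + p * a) / p = a := by
      rw [Nat.add_mul_div_left _ _ (by omega : 0 < p), Nat.div_eq_of_lt (by omega)]
      omega
    rw [h1, h2]
  have hsd : (p.digits d).sum = 1 + (p.digits ((p - 1) * a)).sum := by
    rw [hd]; exact digsum_pow_add p hp2 k _ (by omega)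
  have hsdlt : (p.digits ((p - 1) * a)).sum < k * (p - 1) :=
    digsum_lt p hp2 k _ (by omega)
  have hcompl : (p.digits (p ^ k - 1 - a)).sum + (p.digits a).sum = k * (p - 1) :=
    digsum_compl p hp2 k a hapk
  have hK := sub_one_mul_padicValNat_choose_eq_sub_sum_digits (p := p) hile
  rw [hdi] at hK
  have hv : 1 ≤ padicValNat p (d.choose i) := by
    rcases Nat.eq_zero_or_pos (padicValNat p (d.choose i)) with h | h
    · rw [h, Nat.mul_zero] at hK
      omega
    · exact h
  have hdvd : p ∣ d.choose i := by
    by_contra h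
    rw [padicValNat.eq_zero_of_not_dvd h] at hv
    omega
  obtain ⟨c, hc⟩ := hdvd
  rw [hc, Nat.mul_mod_right]
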